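/- arXiv:1402.1881 — 2 statements merged into one kernel-verified Lean document; each statement's English description precedes it below -/
import Mathlib

section
/- Let x be a feasible solution such that every job j ∈ 𝒥_f(x) has both the same immediate predecessor and the same immediate successor (possibly dummy) in every fractional schedule of x containing j. Then any two distinct fractional schedules of x are disjoint; equivalently, every job belongs to at most one fractional schedule of x. -/
open scoped Classical BigOperators

/-- A finset of jobs is pairwise compatible. -/
def Compatible {n : ℕ} (r d : Fin n → ℝ) (L : ℝ) (s : Finset (Fin n)) : Prop :=
  ∀ j ∈ s, ∀ k ∈ s, j < k → d j ≤ r k ∧ d k - r j ≤ L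

/-- A schedule for machine class `i`. -/
def IsSchedule {n c : ℕ} (r d : Fin n → ℝ) (L : ℝ) (𝒥 : Fin c → Set (Fin n))
    (i : Fin c) (s : Finset (Fin n)) : Prop :=
  s.Nonempty ∧ Compatible r d L s ∧ ∀ j ∈ s, j ∈ 𝒥 i

/-- A feasible (fractional covering) solution. -/
def Feasible {n c : ℕ} (r d : Fin n → ℝ) (L : ℝ) (𝒥 : Fin c → Set (Fin n))
    (x : Fin c × Finset (Fin n) → ℝ) : Prop :=
  (∀ p, 0 ≤ x p) ∧
  (∀ p, 0 < x p → IsSchedule r d L 𝒥 p.1 p.2) ∧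
  (∀ j : Fin n, 1 ≤ ∑ p : Fin c × Finset (Fin n), if j ∈ p.2 then x p else 0)

/-- The cost of a solution. -/
def cost {n c : ℕ} (w : Fin c → ℝ) (x : Fin c × Finset (Fin n) → ℝ) : ℝ :=
  ∑ p : Fin c × Finset (Fin n), w p.1 * x p

/-- Optimality. -/
def Optimal {n c : ℕ} (r d : Fin n → ℝ) (L : ℝ) (𝒥 : Fin c → Set (Fin n)) (w : Fin c → ℝ)
    (x : Fin c × Finset (Fin n) → ℝ) : Prop :=
  Feasible r d L 𝒥 x ∧ ∀ y, Feasible r d L 𝒥 y → cost w x ≤ cost w y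

/-- A column is fractional. -/
def FracCol {n c : ℕ} (x : Fin c × Finset (Fin n) → ℝ) (p : Fin c × Finset (Fin n)) : Prop :=
  0 < x p ∧ x p < 1

/-- A fractional schedule of `x`. -/
def FracSched {n c : ℕ} (x : Fin c × Finset (Fin n) → ℝ) (s : Finset (Fin n)) : Prop :=
  ∃ i, FracCol x (i, s)

/-- The set of jobs belonging to some fractional schedule. -/
def Jf {n c : ℕ} (x : Fin c × Finset (Fin n) → ℝ) : Set (Fin n) :=
  {j | ∃ s, FracSched x s ∧ j ∈ s}

/-- Immediate successor of `j` in `s` (`⊤` = dummy successor). -/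
def succIn {n : ℕ} (s : Finset (Fin n)) (j : Fin n) : WithTop (Fin n) :=
  (s.filter (fun k => j < k)).min

/-- Immediate predecessor of `j` in `s` (`⊥` = dummy predecessor). -/
def predIn {n : ℕ} (s : Finset (Fin n)) (j : Fin n) : WithBot (Fin n) :=
  (s.filter (fun k => k < j)).max

/-- Condition (⋆). -/
def StarCond {n c : ℕ} (x : Fin c × Finset (Fin n) → ℝ) : Prop :=
  ∀ j ∈ Jf x, 1 ≤ ∑ p : Fin c × Finset (Fin n),
    if FracCol x p ∧ j ∈ p.2 then x p else 0

/-- Integral solution. -/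
def Integral {n c : ℕ} (x : Fin c × Finset (Fin n) → ℝ) : Prop :=
  ∀ p, x p = 0 ∨ x p = 1


lemma pred_succ_aux {n : ℕ} {s : Finset (Fin n)} {j k : Fin n}
    (hj : j ∈ s) (hk : k ∈ s) (hjk : j < k) :
    ∃ p : Fin n, p ∈ s ∧ j ≤ p ∧ p < k ∧ succIn s p = (k : WithTop (Fin n)) := by
  classical
  set t := s.filter (fun e => e < k) with ht
  have hjt : j ∈ t := Finset.mem_filter.mpr ⟨hj, hjk⟩
  obtain ⟨p, hp⟩ := Finset.max_of_mem hjt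
  have hpt : p ∈ t := Finset.mem_of_max hp
  have hps' : p ∈ s := (Finset.mem_filter.mp hpt).1
  have hpk : p < k := (Finset.mem_filter.mp hpt).2
  have hjp : j ≤ p := by
    have := Finset.le_max hjt
    rw [hp] at this
    exact_mod_cast this
  refine ⟨p, hps', hjp, hpk, ?_⟩
  set t2 := s.filter (fun e => p < e) with ht2
  have hkt2 : k ∈ t2 := Finset.mem_filter.mpr ⟨hk, hpk⟩
  obtain ⟨m, hm⟩ := Finset.min_of_mem hkt2
  have hmt2 : m ∈ t2 := Finset.mem_of_min hm
  have hms : m ∈ s := (Finset.mem_filter.mp hmt2).1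
  have hpm : p < m := (Finset.mem_filter.mp hmt2).2
  have hmk : m ≤ k := by
    have := Finset.min_le hkt2
    rw [hm] at this
    exact_mod_cast this
  have hmk' : m = k := by
    rcases lt_or_eq_of_le hmk with h | h
    · exfalso
      have hmt : m ∈ t := Finset.mem_filter.mpr ⟨hms, h⟩
      have := Finset.le_max hmt
      rw [hp] at this
      exact absurd (WithBot.coe_le_coe.mp this) (not_le.mpr hpm)
    · exact h
  rw [succIn, ← ht2, hm, hmk']

lemma succ_pred_aux {n : ℕ} {s : Finset (Fin n)} {j k : Fin n}
    (hj : j ∈ s) (hk : k ∈ s) (hkj : k < j) :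
    ∃ q : Fin n, q ∈ s ∧ k < q ∧ q ≤ j ∧ predIn s q = (k : WithBot (Fin n)) := by
  classical
  set t := s.filter (fun e => k < e) with ht
  have hjt : j ∈ t := Finset.mem_filter.mpr ⟨hj, hkj⟩
  obtain ⟨q, hq⟩ := Finset.min_of_mem hjt
  have hqt : q ∈ t := Finset.mem_of_min hq
  have hqs : q ∈ s := (Finset.mem_filter.mp hqt).1
  have hkq : k < q := (Finset.mem_filter.mp hqt).2
  have hqj : q ≤ j := by
    have := Finset.min_le hjt
    rw [hq] at this
    exact_mod_cast this
  refine ⟨q, hqs, hkq, hqj, ?_⟩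
  set t2 := s.filter (fun e => e < q) with ht2
  have hkt2 : k ∈ t2 := Finset.mem_filter.mpr ⟨hk, hkq⟩
  obtain ⟨m, hm⟩ := Finset.max_of_mem hkt2
  have hmt2 : m ∈ t2 := Finset.mem_of_max hm
  have hms : m ∈ s := (Finset.mem_filter.mp hmt2).1
  have hmq : m < q := (Finset.mem_filter.mp hmt2).2
  have hkm : k ≤ m := by
    have := Finset.le_max hkt2
    rw [hm] at this
    exact_mod_cast this
  have hmk' : m = k := by
    rcases lt_or_eq_of_le hkm with h | h
    · exfalso
      have hmt : m ∈ t := Finset.mem_filter.mpr ⟨hms, h⟩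
      have := Finset.min_le hmt
      rw [hq] at this
      exact absurd (WithTop.coe_le_coe.mp this) (not_le.mpr hmq)
    · exact h.symm
  rw [predIn, ← ht2, hm, hmk']

lemma mem_of_succIn_eq {n : ℕ} {s : Finset (Fin n)} {p k : Fin n}
    (h : succIn s p = (k : WithTop (Fin n))) : k ∈ s := by
  have := Finset.mem_of_min h
  exact (Finset.mem_filter.mp this).1

lemma mem_of_predIn_eq {n : ℕ} {s : Finset (Fin n)} {q k : Fin n}
    (h : predIn s q = (k : WithBot (Fin n))) : k ∈ s := by
  have := Finset.mem_of_max h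
  exact (Finset.mem_filter.mp this).1


theorem same_pred_succ_implies_disjoint {n c : ℕ} (r d : Fin n → ℝ) (L : ℝ) (𝒥 : Fin c → Set (Fin n)) (w : Fin c → ℝ)
    (hrd : ∀ j, r j ≤ d j) (hmono : ∀ j k : Fin n, j ≤ k → r j ≤ r k)
    (hL : 0 < L) (hw : ∀ i, 0 < w i)
    (x : Fin c × Finset (Fin n) → ℝ)
    (hfeas : Feasible r d L 𝒥 x)
    (hps : ∀ j ∈ Jf x, ∀ s s' : Finset (Fin n),
      FracSched x s → FracSched x s' → j ∈ s → j ∈ s' →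
        predIn s j = predIn s' j ∧ succIn s j = succIn s' j) :
    ∀ s s' : Finset (Fin n), FracSched x s → FracSched x s' → s ≠ s' →
      Disjoint s s' := by
  intro s s' hs hs' hne
  -- It suffices to show: common element implies s = s'
  rw [Finset.disjoint_left]
  intro j hjs hjs'
  apply hne
  -- Main claim: for any two fractional schedules sharing a point, one is a subset of the other
  have key : ∀ t t' : Finset (Fin n), FracSched x t → FracSched x t' →
      ∀ j, j ∈ t → j ∈ t' → ∀ k ∈ t, k ∈ t' := by
    intro t t' ht ht' j hjt hjt' k hkt
    have hJf : ∀ m ∈ t, m ∈ Jf x := fun m hm => ⟨t, ht, hm⟩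
    rcases lt_trichotomy j k with hlt | heq | hgt
    · -- upward induction on k.val
      have up : ∀ N : ℕ, ∀ k : Fin n, k.val = N → k ∈ t → j < k → k ∈ t' := by
        intro N
        induction N using Nat.strong_induction_on with
        | _ N ih =>
          intro k hkN hkt hjk
          obtain ⟨p, hpt, hjp, hpk, hsucc⟩ := pred_succ_aux hjt hkt hjk
          have hpt' : p ∈ t' := by
            rcases lt_or_eq_of_le hjp with h | h
            · exact ih p.val (hkN ▸ hpk) p rfl hpt h
            · exact h ▸ hjt'
          have := (hps p (hJf p hpt) t t' ht ht' hpt hpt').2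
          rw [hsucc] at this
          exact mem_of_succIn_eq this.symm
      exact up k.val k rfl hkt hlt
    · exact heq ▸ hjt'
    · -- downward induction on j.val - k.val... use k.val with reversed order: induct on (n - k.val)? use strong induction on (j.val - k.val)
      have down : ∀ N : ℕ, ∀ k : Fin n, j.val - k.val = N → k ∈ t → k < j → k ∈ t' := by
        intro N
        induction N using Nat.strong_induction_on with
        | _ N ih =>
          intro k hkN hkt hkj
          obtain ⟨q, hqt, hkq, hqj, hpred⟩ := succ_pred_aux hjt hkt hkj
          have hqt' : q ∈ t' := by
            rcases lt_or_eq_of_le hqj with h | h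
            · have hlt : j.val - q.val < N := by
                have h1 : k.val < q.val := hkq
                have h2 : q.val < j.val := h
                omega
              exact ih (j.val - q.val) hlt q rfl hqt h
            · exact h ▸ hjt'
          have := (hps q (hJf q hqt) t t' ht ht' hqt hqt').1
          rw [hpred] at this
          exact mem_of_predIn_eq this.symm
      exact down (j.val - k.val) k rfl hkt hgt
  apply Finset.Subset.antisymm
  · exact fun k hk => key s s' hs hs' j hjs hjs' k hk
  · exact fun k hk => key s' s hs' hs j hjs' hjs k hk
end

section
/- Let x be a feasible solution satisfying condition (⋆), and let k < ℓ be jobs in 𝒥_f(x) such that every fractional schedule of x containing k also contains ℓ. Then the solution x' obtained from x by moving, for each fractional column (i, s) with ℓ ∈ s and k ∉ s, the value x (i, s) onto the column (i, s \ {ℓ}) (dropping it when s = {ℓ}) is feasible and satisfies cost(x') ≤ cost(x); in particular, if x is optimal then x' is optimal. -/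
open scoped Classical BigOperators

/-- The solution obtained from `x` by moving, for each fractional column `(i, s)` with
`ℓ ∈ s` and `k ∉ s`, the value `x (i, s)` onto the column `(i, s \\ {ℓ})`,
dropping it when `s = {ℓ}`. -/
noncomputable def moveOffPair {n c : ℕ} (x : Fin c × Finset (Fin n) → ℝ) (k ℓ : Fin n) :
    Fin c × Finset (Fin n) → ℝ := fun p =>
  (if ℓ ∈ p.2 ∧ k ∉ p.2 ∧ FracCol x p then 0 else x p) +
  (if ℓ ∉ p.2 ∧ k ∉ p.2 ∧ p.2.Nonempty ∧ FracCol x (p.1, insert ℓ p.2) then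
      x (p.1, insert ℓ p.2) else 0)


lemma sum_insert_bij {n c : ℕ} (ℓ : Fin n) (g : Fin c × Finset (Fin n) → ℝ) :
    ∑ p : Fin c × Finset (Fin n), (if ℓ ∈ p.2 then (0:ℝ) else g (p.1, insert ℓ p.2))
    = ∑ p : Fin c × Finset (Fin n), (if ℓ ∈ p.2 then g p else 0) := by
  classical
  have h1 : ∀ p : Fin c × Finset (Fin n),
      (if ℓ ∈ p.2 then (0:ℝ) else g (p.1, insert ℓ p.2))
      = (if ℓ ∉ p.2 then g (p.1, insert ℓ p.2) else 0) := by
    intro p; by_cases h : ℓ ∈ p.2 <;> simp [h]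
  simp_rw [h1]
  rw [← Finset.sum_filter, ← Finset.sum_filter]
  apply Finset.sum_nbij' (i := fun p => (p.1, insert ℓ p.2)) (j := fun p => (p.1, p.2.erase ℓ))
  · intro a ha
    simp only [Finset.mem_filter, Finset.mem_univ, true_and] at ha ⊢
    exact Finset.mem_insert_self _ _
  · intro a ha
    simp only [Finset.mem_filter, Finset.mem_univ, true_and] at ha ⊢
    exact Finset.notMem_erase _ _
  · intro a ha
    simp only [Finset.mem_filter, Finset.mem_univ, true_and] at ha
    simp [Finset.erase_insert ha]
  · intro a ha
    simp only [Finset.mem_filter, Finset.mem_univ, true_and] at ha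
    simp [Finset.insert_erase ha]
  · intro a _; rfl

lemma Compatible.subset' {n : ℕ} {r d : Fin n → ℝ} {L : ℝ} {s t : Finset (Fin n)}
    (hst : s ⊆ t) (h : Compatible r d L t) : Compatible r d L s :=
  fun j hj k hk hjk => h j (hst hj) k (hst hk) hjk

set_option maxHeartbeats 1600000 in
theorem remove_trailing_job_keeps_feasibility {n c : ℕ} (r d : Fin n → ℝ) (L : ℝ) (𝒥 : Fin c → Set (Fin n)) (w : Fin c → ℝ)
    (hrd : ∀ j, r j ≤ d j) (hmono : ∀ j k : Fin n, j ≤ k → r j ≤ r k)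
    (hL : 0 < L) (hw : ∀ i, 0 < w i)
    (x : Fin c × Finset (Fin n) → ℝ)
    (hfeas : Feasible r d L 𝒥 x) (hstar : StarCond x)
    (k ℓ : Fin n) (hkl : k < ℓ) (hk : k ∈ Jf x) (hl : ℓ ∈ Jf x)
    (hcover : ∀ s : Finset (Fin n), FracSched x s → k ∈ s → ℓ ∈ s) :
    Feasible r d L 𝒥 (moveOffPair x k ℓ) ∧
    cost w (moveOffPair x k ℓ) ≤ cost w x ∧
    (Optimal r d L 𝒥 w x → Optimal r d L 𝒥 w (moveOffPair x k ℓ)) := by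
  classical
  obtain ⟨hx0, hxs, hxc⟩ := hfeas
  set x' := moveOffPair x k ℓ with hx'
  have hkl' : k ≠ ℓ := ne_of_lt hkl
  -- notation for the two summands
  have hA0 : ∀ p : Fin c × Finset (Fin n),
      0 ≤ (if ℓ ∈ p.2 ∧ k ∉ p.2 ∧ FracCol x p then 0 else x p) := by
    intro p; split_ifs
    · exact le_refl 0
    · exact hx0 p
  have hB0 : ∀ p : Fin c × Finset (Fin n),
      0 ≤ (if ℓ ∉ p.2 ∧ k ∉ p.2 ∧ p.2.Nonempty ∧ FracCol x (p.1, insert ℓ p.2) then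
        x (p.1, insert ℓ p.2) else 0) := by
    intro p; split_ifs
    · exact hx0 _
    · exact le_refl 0
  have hx'0 : ∀ p, 0 ≤ x' p := fun p => add_nonneg (hA0 p) (hB0 p)
  -- support on schedules
  have hx's : ∀ p, 0 < x' p → IsSchedule r d L 𝒥 p.1 p.2 := by
    intro p hp
    by_cases hc : ℓ ∉ p.2 ∧ k ∉ p.2 ∧ p.2.Nonempty ∧ FracCol x (p.1, insert ℓ p.2)
    · obtain ⟨h1, h2, h3, h4⟩ := hc
      have hsch := hxs (p.1, insert ℓ p.2) h4.1
      refine ⟨h3, Compatible.subset' (Finset.subset_insert ℓ p.2) hsch.2.1, ?_⟩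
      intro j hj; exact hsch.2.2 j (Finset.mem_insert_of_mem hj)
    · have hB : (if ℓ ∉ p.2 ∧ k ∉ p.2 ∧ p.2.Nonempty ∧ FracCol x (p.1, insert ℓ p.2) then
          x (p.1, insert ℓ p.2) else 0) = 0 := if_neg hc
      have hA : 0 < (if ℓ ∈ p.2 ∧ k ∉ p.2 ∧ FracCol x p then 0 else x p) := by
        have := hp; simp only [hx', moveOffPair] at this
        rw [hB] at this; linarith
      split_ifs at hA with h
      · exact absurd hA (lt_irrefl 0)
      · exact hxs p hA
  -- covering constraints
  have hx'c : ∀ j : Fin n, 1 ≤ ∑ p : Fin c × Finset (Fin n),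
      if j ∈ p.2 then x' p else 0 := by
    intro j
    by_cases hjl : j = ℓ
    · -- case j = ℓ : use star condition at k
      rw [hjl]
      have hstar_k := hstar k hk
      calc (1:ℝ) ≤ ∑ p : Fin c × Finset (Fin n),
            if FracCol x p ∧ k ∈ p.2 then x p else 0 := hstar_k
        _ ≤ ∑ p : Fin c × Finset (Fin n), if ℓ ∈ p.2 then x' p else 0 := by
            apply Finset.sum_le_sum
            intro p _
            by_cases hc : FracCol x p ∧ k ∈ p.2
            · rw [if_pos hc]
              have hls : ℓ ∈ p.2 := by
                apply hcover p.2 _ hc.2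
                exact ⟨p.1, by rw [Prod.mk.eta]; exact hc.1⟩
              rw [if_pos hls]
              have hA : (if ℓ ∈ p.2 ∧ k ∉ p.2 ∧ FracCol x p then 0 else x p) = x p := by
                rw [if_neg]; rintro ⟨-, hk2, -⟩; exact hk2 hc.2
              have := hB0 p
              simp only [hx', moveOffPair]; rw [hA]; linarith
            · rw [if_neg hc]
              split_ifs with h
              · exact hx'0 p
              · rfl
    · -- case j ≠ ℓ : sum is preserved
      have key : ∑ p : Fin c × Finset (Fin n), (if j ∈ p.2 then x' p else 0)
          = ∑ p : Fin c × Finset (Fin n), (if j ∈ p.2 then x p else 0) := by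
        have hsplit : ∀ p : Fin c × Finset (Fin n), (if j ∈ p.2 then x' p else 0)
            = ((if j ∈ p.2 then x p else 0)
              - (if j ∈ p.2 ∧ ℓ ∈ p.2 ∧ k ∉ p.2 ∧ FracCol x p then x p else 0))
              + (if ℓ ∈ p.2 then (0:ℝ) else
                  (if j ∈ (p.1, insert ℓ p.2).2 ∧ ℓ ∈ (p.1, insert ℓ p.2).2
                    ∧ k ∉ (p.1, insert ℓ p.2).2 ∧ FracCol x (p.1, insert ℓ p.2)
                    then x (p.1, insert ℓ p.2) else 0)) := by
          intro p
          simp only [hx', moveOffPair]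
          have h1 : k ∈ insert ℓ p.2 ↔ k ∈ p.2 := by simp [hkl']
          have h2 : j ∈ insert ℓ p.2 ↔ j ∈ p.2 := by simp [hjl]
          have h3 : ℓ ∈ insert ℓ p.2 := Finset.mem_insert_self _ _
          have h4 : j ∈ p.2 → p.2.Nonempty := fun h => ⟨j, h⟩
          by_cases hlp : ℓ ∈ p.2
          · rw [if_neg (show ¬(ℓ ∉ p.2 ∧ k ∉ p.2 ∧ p.2.Nonempty
                ∧ FracCol x (p.1, insert ℓ p.2)) from fun hc => hc.1 hlp), if_pos hlp]
            split_ifs <;> (first | ring1 | tauto)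
          · rw [if_neg hlp,
              if_neg (show ¬(j ∈ p.2 ∧ ℓ ∈ p.2 ∧ k ∉ p.2 ∧ FracCol x p)
                from fun hc => hlp hc.2.1)]
            split_ifs <;> (first | ring1 | tauto)
        simp_rw [hsplit]
        rw [Finset.sum_add_distrib, Finset.sum_sub_distrib]
        rw [sum_insert_bij ℓ (fun q => if j ∈ q.2 ∧ ℓ ∈ q.2 ∧ k ∉ q.2 ∧ FracCol x q
          then x q else 0)]
        have : ∀ p : Fin c × Finset (Fin n),
            (if ℓ ∈ p.2 then (if j ∈ p.2 ∧ ℓ ∈ p.2 ∧ k ∉ p.2 ∧ FracCol x p then x p else 0)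
              else 0)
            = (if j ∈ p.2 ∧ ℓ ∈ p.2 ∧ k ∉ p.2 ∧ FracCol x p then x p else 0) := by
          intro p
          by_cases hlp : ℓ ∈ p.2
          · rw [if_pos hlp]
          · rw [if_neg hlp, if_neg (by rintro ⟨-, h1, -⟩; exact hlp h1)]
        simp_rw [this]
        ring
      rw [key]; exact hxc j
  have hcost : cost w x' ≤ cost w x := by
      have hsplit : ∀ p : Fin c × Finset (Fin n), w p.1 * x' p
          = (w p.1 * x p - (if ℓ ∈ p.2 ∧ k ∉ p.2 ∧ FracCol x p then w p.1 * x p else 0))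
            + (if ℓ ∈ p.2 then (0:ℝ) else
                (if k ∉ (p.1, insert ℓ p.2).2 ∧ ((p.1, insert ℓ p.2).2.erase ℓ).Nonempty
                  ∧ FracCol x (p.1, insert ℓ p.2)
                  then w (p.1, insert ℓ p.2).1 * x (p.1, insert ℓ p.2) else 0)) := by
        intro p
        simp only [hx', moveOffPair]
        have h1 : k ∈ insert ℓ p.2 ↔ k ∈ p.2 := by simp [hkl']
        have h3 : ℓ ∈ insert ℓ p.2 := Finset.mem_insert_self _ _
        by_cases hlp : ℓ ∈ p.2
        · rw [if_neg (show ¬(ℓ ∉ p.2 ∧ k ∉ p.2 ∧ p.2.Nonempty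
              ∧ FracCol x (p.1, insert ℓ p.2)) from fun hc => hc.1 hlp), if_pos hlp]
          split_ifs <;> ring1
        · have herase : (insert ℓ p.2).erase ℓ = p.2 := Finset.erase_insert hlp
          rw [if_neg hlp,
            if_neg (show ¬(ℓ ∈ p.2 ∧ k ∉ p.2 ∧ FracCol x p) from fun hc => hlp hc.1),
            if_neg (show ¬(ℓ ∈ p.2 ∧ k ∉ p.2 ∧ FracCol x p) from fun hc => hlp hc.1)]
          simp only [herase]
          split_ifs <;> (first | ring1 | tauto)
      have hx'cost : cost w x' = cost w x
          - (∑ p : Fin c × Finset (Fin n),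
              if ℓ ∈ p.2 ∧ k ∉ p.2 ∧ FracCol x p then w p.1 * x p else 0)
          + (∑ p : Fin c × Finset (Fin n),
              if ℓ ∈ p.2 then (if k ∉ p.2 ∧ (p.2.erase ℓ).Nonempty ∧ FracCol x p
                then w p.1 * x p else 0) else 0) := by
        unfold cost
        simp_rw [hsplit]
        rw [Finset.sum_add_distrib, Finset.sum_sub_distrib]
        rw [sum_insert_bij ℓ (fun q => if k ∉ q.2 ∧ (q.2.erase ℓ).Nonempty ∧ FracCol x q
          then w q.1 * x q else 0)]
      rw [hx'cost]
      have hle : (∑ p : Fin c × Finset (Fin n),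
            if ℓ ∈ p.2 then (if k ∉ p.2 ∧ (p.2.erase ℓ).Nonempty ∧ FracCol x p
              then w p.1 * x p else 0) else 0)
          ≤ ∑ p : Fin c × Finset (Fin n),
              if ℓ ∈ p.2 ∧ k ∉ p.2 ∧ FracCol x p then w p.1 * x p else 0 := by
        apply Finset.sum_le_sum
        intro p _
        have hwx : 0 ≤ w p.1 * x p := mul_nonneg (le_of_lt (hw p.1)) (hx0 p)
        by_cases hlp : ℓ ∈ p.2
        · rw [if_pos hlp]
          by_cases hc : k ∉ p.2 ∧ (p.2.erase ℓ).Nonempty ∧ FracCol x p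
          · rw [if_pos hc, if_pos ⟨hlp, hc.1, hc.2.2⟩]
          · rw [if_neg hc]; split_ifs with h
            · exact hwx
            · rfl
        · rw [if_neg hlp, if_neg (fun hc => hlp hc.1)]
      linarith
  refine ⟨⟨hx'0, hx's, hx'c⟩, hcost, ?_⟩
  intro hopt
  exact ⟨⟨hx'0, hx's, hx'c⟩, fun y hy => le_trans hcost (hopt.2 y hy)⟩
end
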